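/- Let n ∈ ℕ, h ∈ ℕ with h ≥ 1, let P ∈ ℝ^{n×n} be a positive semidefinite symmetric matrix with operator norm ‖P‖, let μ₁, μ₂ > 0, κ, λ ∈ (0,1), η, β, δ ≥ 0 with η < β, and set γ = (1 + 1/μ₁ + 1/μ₂)·‖P‖ and assume γ·δ ≤ (1−λ)·β. Let X, X_a, X_b ⊆ ℝⁿ, and let J, Y : ℝⁿ × ℝⁿ → ℝ^{n×n} be closed-loop matrices. Assume: (i) xᵀPx ≤ η/(1 + κ(λ−λ^{h+1})/(1−λ)) for all x ∈ X_a; (ii) xᵀPx ≥ β for all x ∈ X_b; (iii) for all x, x_h ∈ X, the 2n×2n symmetric block matrix with blocks (1+μ₁)·J(x,x_h)ᵀPJ(x,x_h) + λ(κ−1)P, J(x,x_h)ᵀPY(x,x_h), Y(x,x_h)ᵀPJ(x,x_h), and (1+μ₂)·Y(x,x_h)ᵀPY(x,x_h) − κλ^{h+1}P is negative semidefinite. Let y : ℤ → ℝⁿ be any trajectory with y(k) ∈ X for all k ≥ −h, initial history y(0), y(−1), …, y(−h) ∈ X_a, and y(k+1) = J(y(k), y(k−h))·y(k) + Y(y(k),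 y(k−h))·y(k−h) + w(k) for all k ≥ 0 with ‖w(k)‖² ≤ δ. Then for every k ≥ 0, it is not the case that y(k) ∈ X_b while y(k−1), …, y(k−h) ∈ X \ X_b; in particular y(k) ∉ X_b for all k ≥ −h. -/

import Mathlib

open Matrix
open scoped Matrix.Norms.L2Operator

section helpers

open scoped RealInnerProductSpace

variable {n : ℕ} {P : Matrix (Fin n) (Fin n) ℝ}

lemma qd_nonneg (hP : P.PosSemidef) (x : Fin n → ℝ) : 0 ≤ x ⬝ᵥ (P *ᵥ x) := by
  have := hP.re_dotProduct_nonneg x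
  simpa using this

lemma qd_symm (hP : P.PosSemidef) (a b : Fin n → ℝ) :
    a ⬝ᵥ (P *ᵥ b) = b ⬝ᵥ (P *ᵥ a) := by
  have hPt : Pᵀ = P := by
    have := hP.isHermitian
    rw [Matrix.IsHermitian, conjTranspose_eq_transpose_of_trivial] at this
    exact this
  have hv : a ᵥ* P = P *ᵥ a :=
    calc a ᵥ* P = a ᵥ* Pᵀ := by rw [hPt]
    _ = P *ᵥ a := vecMul_transpose P a
  rw [dotProduct_mulVec, hv, dotProduct_comm]

lemma qd_young (hP : P.PosSemidef) {μ : ℝ} (hμ : 0 < μ) (a b : Fin n → ℝ) :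
    2 * (a ⬝ᵥ (P *ᵥ b)) ≤ μ * (a ⬝ᵥ (P *ᵥ a)) + μ⁻¹ * (b ⬝ᵥ (P *ᵥ b)) := by
  have h0 : 0 ≤ (μ • a - b) ⬝ᵥ (P *ᵥ (μ • a - b)) := qd_nonneg hP _
  have hsym := qd_symm hP a b
  have hexp : (μ • a - b) ⬝ᵥ (P *ᵥ (μ • a - b)) =
      μ^2 * (a ⬝ᵥ (P *ᵥ a)) - 2*μ*(a ⬝ᵥ (P *ᵥ b)) + b ⬝ᵥ (P *ᵥ b) := by
    simp [mulVec_sub, mulVec_smul, dotProduct_sub, sub_dotProduct, smul_dotProduct,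
      dotProduct_smul, smul_eq_mul, hsym]
    ring_nf
  rw [hexp] at h0
  have key : μ * (2 * (a ⬝ᵥ (P *ᵥ b))) ≤ μ * (μ * (a ⬝ᵥ (P *ᵥ a)) + μ⁻¹ * (b ⬝ᵥ (P *ᵥ b))) := by
    have e : μ * (μ * (a ⬝ᵥ (P *ᵥ a)) + μ⁻¹ * (b ⬝ᵥ (P *ᵥ b)))
        = μ^2 * (a ⬝ᵥ (P *ᵥ a)) + b ⬝ᵥ (P *ᵥ b) := by field_simp
    rw [e]; linarith
  exact le_of_mul_le_mul_left key hμ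

lemma qd_norm (x : Fin n → ℝ) :
    x ⬝ᵥ (P *ᵥ x) ≤ ‖P‖ * ‖(WithLp.equiv 2 (Fin n → ℝ)).symm x‖ ^ 2 := by
  set x' : EuclideanSpace ℝ (Fin n) := (WithLp.equiv 2 (Fin n → ℝ)).symm x with hx'
  have h1 : x ⬝ᵥ (P *ᵥ x) = ⟪x', (EuclideanSpace.equiv (Fin n) ℝ).symm (P *ᵥ x)⟫ := by
    rw [EuclideanSpace.inner_eq_star_dotProduct]
    simp [hx']
    exact dotProduct_comm _ _
  calc x ⬝ᵥ (P *ᵥ x) ≤ ‖x'‖ * ‖(EuclideanSpace.equiv (Fin n) ℝ).symm (P *ᵥ x)‖ := by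
        rw [h1]; exact real_inner_le_norm _ _
    _ ≤ ‖x'‖ * (‖P‖ * ‖x'‖) := by
        apply mul_le_mul_of_nonneg_left _ (norm_nonneg _)
        simpa [hx'] using P.l2_opNorm_mulVec x'
    _ = ‖P‖ * ‖x'‖^2 := by ring

lemma qd_expand3 (hP : P.PosSemidef) (a b c : Fin n → ℝ) :
    (a + b + c) ⬝ᵥ (P *ᵥ (a + b + c)) =
      a ⬝ᵥ (P *ᵥ a) + b ⬝ᵥ (P *ᵥ b) + c ⬝ᵥ (P *ᵥ c)
      + 2*(a ⬝ᵥ (P *ᵥ b)) + 2*(a ⬝ᵥ (P *ᵥ c)) + 2*(b ⬝ᵥ (P *ᵥ c)) := by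
  simp [mulVec_add, dotProduct_add, add_dotProduct, qd_symm hP b a, qd_symm hP c a,
    qd_symm hP c b]
  ring

lemma qd_block {A B C D : Matrix (Fin n) (Fin n) ℝ}
    (hM : (-(fromBlocks A B C D)).PosSemidef) (x xh : Fin n → ℝ) :
    x ⬝ᵥ (A *ᵥ x) + x ⬝ᵥ (B *ᵥ xh) + xh ⬝ᵥ (C *ᵥ x) + xh ⬝ᵥ (D *ᵥ xh) ≤ 0 := by
  have h := hM.re_dotProduct_nonneg (Sum.elim x xh)
  simp only [neg_mulVec, dotProduct_neg, fromBlocks_mulVec, star_trivial,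
    sumElim_dotProduct_sumElim, dotProduct_add, RCLike.re_to_real, Sum.elim_comp_inl,
    Sum.elim_comp_inr] at h
  linarith

lemma qd_block' {Jm Ym : Matrix (Fin n) (Fin n) ℝ} (hP : P.PosSemidef)
    {μ₁ μ₂ c d : ℝ}
    (hM : (-(fromBlocks
        ((1 + μ₁) • (Jmᵀ * P * Jm) + c • P)
        (Jmᵀ * P * Ym)
        (Ymᵀ * P * Jm)
        ((1 + μ₂) • (Ymᵀ * P * Ym) - d • P))).PosSemidef)
    (x xh : Fin n → ℝ) :
    (1 + μ₁) * ((Jm *ᵥ x) ⬝ᵥ (P *ᵥ (Jm *ᵥ x)))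
      + 2 * ((Jm *ᵥ x) ⬝ᵥ (P *ᵥ (Ym *ᵥ xh)))
      + (1 + μ₂) * ((Ym *ᵥ xh) ⬝ᵥ (P *ᵥ (Ym *ᵥ xh)))
      ≤ (-c) * (x ⬝ᵥ (P *ᵥ x)) + d * (xh ⬝ᵥ (P *ᵥ xh)) := by
  have h := qd_block hM x xh
  have e1 : ∀ (v u : Fin n → ℝ) (M N : Matrix (Fin n) (Fin n) ℝ),
      v ⬝ᵥ ((Mᵀ * P * N) *ᵥ u) = (M *ᵥ v) ⬝ᵥ (P *ᵥ (N *ᵥ u)) := by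
    intro v u M N
    rw [Matrix.mul_assoc, ← mulVec_mulVec,
      dotProduct_mulVec v, vecMul_transpose, ← mulVec_mulVec]
  simp only [add_mulVec, sub_mulVec, smul_mulVec, dotProduct_add, dotProduct_sub,
    dotProduct_smul, smul_eq_mul, e1] at h
  rw [qd_symm hP (Ym *ᵥ xh) (Jm *ᵥ x)] at h
  linarith

/-- Krasovskii functional. -/
noncomputable def Vfun {n : ℕ} (P : Matrix (Fin n) (Fin n) ℝ) (κ lam : ℝ) (m : ℕ)
    (y : ℤ → Fin n → ℝ) (k : ℤ) : ℝ :=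
  y k ⬝ᵥ (P *ᵥ y k)
    + κ * ∑ i ∈ Finset.range (m+1), lam^(i+1) * (y (k - i - 1) ⬝ᵥ (P *ᵥ y (k - i - 1)))

end helpers


/-- **Data-driven robust safety of the closed-loop delayed system.**
Under the level-set conditions (i), (ii) on `P`, the block negative
semidefiniteness condition (iii) on the closed-loop matrices `J`, `Y`, and the
dissipation inequality `γδ ≤ (1-λ)β` with `γ = (1 + 1/μ₁ + 1/μ₂)‖P‖`, every
trajectory of `y(k+1) = J(y k, y(k-h))y(k) + Y(y k, y(k-h))y(k-h) + w(k)` with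
`‖w(k)‖² ≤ δ`, values in `X`, and initial history in `X_a`, never has a state
history in `X_b × (X \ X_b)^h`; in particular `y(k) ∉ X_b` for all `k ≥ -h`. -/
theorem stmt15
    (n h : ℕ) (hh : 1 ≤ h)
    (P : Matrix (Fin n) (Fin n) ℝ) (hP : P.PosSemidef)
    (μ₁ μ₂ κ lam η β δ : ℝ)
    (hμ₁ : 0 < μ₁) (hμ₂ : 0 < μ₂)
    (hκ0 : 0 < κ) (hκ1 : κ < 1) (hlam0 : 0 < lam) (hlam1 : lam < 1)
    (hη : 0 ≤ η) (hβ : 0 ≤ β) (hδ : 0 ≤ δ) (hηβ : η < β)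
    (γ : ℝ) (hγ : γ = (1 + 1 / μ₁ + 1 / μ₂) * ‖P‖)
    (hγδ : γ * δ ≤ (1 - lam) * β)
    (X Xa Xb : Set (Fin n → ℝ))
    (J Y : (Fin n → ℝ) → (Fin n → ℝ) → Matrix (Fin n) (Fin n) ℝ)
    (hinitlevel : ∀ x ∈ Xa,
      x ⬝ᵥ (P *ᵥ x) ≤ η / (1 + κ * ((lam - lam ^ (h + 1)) / (1 - lam))))
    (hunsafelevel : ∀ x ∈ Xb, β ≤ x ⬝ᵥ (P *ᵥ x))
    (hblock : ∀ x ∈ X, ∀ xh ∈ X,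
      (-(fromBlocks
        ((1 + μ₁) • ((J x xh)ᵀ * P * J x xh) + (lam * (κ - 1)) • P)
        ((J x xh)ᵀ * P * Y x xh)
        ((Y x xh)ᵀ * P * J x xh)
        ((1 + μ₂) • ((Y x xh)ᵀ * P * Y x xh) - (κ * lam ^ (h + 1)) • P))).PosSemidef)
    (y : ℤ → (Fin n → ℝ)) (w : ℤ → (Fin n → ℝ))
    (hyX : ∀ k : ℤ, -(h : ℤ) ≤ k → y k ∈ X)
    (hinit : ∀ i : ℕ, i ≤ h → y (-(i : ℤ)) ∈ Xa)
    (hdyn : ∀ k : ℤ, 0 ≤ k →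
      y (k + 1) = J (y k) (y (k - (h : ℤ))) *ᵥ y k
        + Y (y k) (y (k - (h : ℤ))) *ᵥ y (k - (h : ℤ)) + w k)
    (hw : ∀ k : ℤ, 0 ≤ k → ‖(WithLp.equiv 2 (Fin n → ℝ)).symm (w k)‖ ^ 2 ≤ δ) :
    (∀ k : ℤ, 0 ≤ k →
      ¬ (y k ∈ Xb ∧ ∀ i : ℕ, 1 ≤ i → i ≤ h → y (k - (i : ℤ)) ∈ X \ Xb)) ∧
    (∀ k : ℤ, -(h : ℤ) ≤ k → y k ∉ Xb) := by
  obtain ⟨m, rfl⟩ : ∃ m, h = m + 1 := ⟨h - 1, (Nat.succ_pred_eq_of_pos hh).symm⟩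
  have hγ0 : 0 ≤ γ := by
    rw [hγ]
    have : (0:ℝ) ≤ 1 + 1/μ₁ + 1/μ₂ := by positivity
    exact mul_nonneg this (norm_nonneg _)
  have hidx : ∀ k : ℤ, k - ((m + 1 : ℕ) : ℤ) = k - (m : ℤ) - 1 := fun k => by push_cast; ring
  -- Step inequality for the quadratic form along the dynamics
  have hstep : ∀ k : ℤ, 0 ≤ k →
      y (k+1) ⬝ᵥ (P *ᵥ y (k+1)) ≤
        lam * (1 - κ) * (y k ⬝ᵥ (P *ᵥ y k))
        + (κ * lam ^ (m+1+1)) * (y (k - (m:ℤ) - 1) ⬝ᵥ (P *ᵥ y (k - (m:ℤ) - 1)))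
        + γ * δ := by
    intro k hk
    have hx : y k ∈ X := hyX k (le_trans (neg_nonpos.mpr (Int.natCast_nonneg _)) hk)
    have hxh : y (k - ((m+1:ℕ):ℤ)) ∈ X := by
      refine hyX _ ?_
      have : (0:ℤ) ≤ ((m+1:ℕ):ℤ) := by positivity
      linarith
    have hb := qd_block' hP (hblock (y k) hx (y (k - ((m+1:ℕ):ℤ))) hxh)
      (y k) (y (k - ((m+1:ℕ):ℤ)))
    have hdk := hdyn k hk
    have he : y (k+1) ⬝ᵥ (P *ᵥ y (k+1)) =
        (J (y k) (y (k - ((m+1:ℕ):ℤ))) *ᵥ y k) ⬝ᵥ (P *ᵥ (J (y k) (y (k - ((m+1:ℕ):ℤ))) *ᵥ y k))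
        + (Y (y k) (y (k - ((m+1:ℕ):ℤ))) *ᵥ y (k - ((m+1:ℕ):ℤ))) ⬝ᵥ
            (P *ᵥ (Y (y k) (y (k - ((m+1:ℕ):ℤ))) *ᵥ y (k - ((m+1:ℕ):ℤ))))
        + (w k) ⬝ᵥ (P *ᵥ w k)
        + 2*((J (y k) (y (k - ((m+1:ℕ):ℤ))) *ᵥ y k) ⬝ᵥ
            (P *ᵥ (Y (y k) (y (k - ((m+1:ℕ):ℤ))) *ᵥ y (k - ((m+1:ℕ):ℤ)))))
        + 2*((J (y k) (y (k - ((m+1:ℕ):ℤ))) *ᵥ y k) ⬝ᵥ (P *ᵥ w k))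
        + 2*((Y (y k) (y (k - ((m+1:ℕ):ℤ))) *ᵥ y (k - ((m+1:ℕ):ℤ))) ⬝ᵥ (P *ᵥ w k)) := by
      rw [hdk]; exact qd_expand3 hP _ _ _
    have hy1 := qd_young hP hμ₁ (J (y k) (y (k - ((m+1:ℕ):ℤ))) *ᵥ y k) (w k)
    have hy2 := qd_young hP hμ₂ (Y (y k) (y (k - ((m+1:ℕ):ℤ))) *ᵥ y (k - ((m+1:ℕ):ℤ))) (w k)
    have hwP : w k ⬝ᵥ (P *ᵥ w k) ≤ ‖P‖ * δ := by
      refine le_trans (qd_norm (w k)) ?_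
      exact mul_le_mul_of_nonneg_left (hw k hk) (norm_nonneg _)
    have hwP0 : 0 ≤ w k ⬝ᵥ (P *ᵥ w k) := qd_nonneg hP _
    have hcoef : (1 + μ₁⁻¹ + μ₂⁻¹) * (w k ⬝ᵥ (P *ᵥ w k)) ≤ γ * δ := by
      rw [hγ]
      have h1 : (0:ℝ) ≤ 1 + μ₁⁻¹ + μ₂⁻¹ := by positivity
      calc (1 + μ₁⁻¹ + μ₂⁻¹) * (w k ⬝ᵥ (P *ᵥ w k))
          ≤ (1 + μ₁⁻¹ + μ₂⁻¹) * (‖P‖ * δ) := mul_le_mul_of_nonneg_left hwP h1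
        _ = (1 + 1/μ₁ + 1/μ₂) * ‖P‖ * δ := by rw [one_div, one_div]; ring
    rw [hidx k] at hb
    simp only [hidx] at he hy1 hy2
    rw [he]
    have hneg : -(lam * (κ - 1)) = lam * (1 - κ) := by ring
    rw [hneg] at hb
    linarith
  -- Telescoping identity for the delayed sum
  have hSstep : ∀ k : ℤ,
      (∑ i ∈ Finset.range (m+1), lam^(i+1) * (y ((k+1) - (i:ℤ) - 1) ⬝ᵥ (P *ᵥ y ((k+1) - (i:ℤ) - 1))))
        = lam * (y k ⬝ᵥ (P *ᵥ y k))
          + lam * (∑ i ∈ Finset.range (m+1), lam^(i+1) * (y (k - (i:ℤ) - 1) ⬝ᵥ (P *ᵥ y (k - (i:ℤ) - 1))))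
          - lam^(m+1+1) * (y (k - (m:ℤ) - 1) ⬝ᵥ (P *ᵥ y (k - (m:ℤ) - 1))) := by
    intro k
    have hL : (∑ i ∈ Finset.range (m+1), lam^(i+1) * (y ((k+1) - (i:ℤ) - 1) ⬝ᵥ (P *ᵥ y ((k+1) - (i:ℤ) - 1))))
        = (∑ i ∈ Finset.range m, lam^(i+2) * (y (k - (i:ℤ) - 1) ⬝ᵥ (P *ᵥ y (k - (i:ℤ) - 1))))
          + lam * (y k ⬝ᵥ (P *ᵥ y k)) := by
      rw [Finset.sum_range_succ'
        (fun i => lam^(i+1) * (y ((k+1) - (i:ℤ) - 1) ⬝ᵥ (P *ᵥ y ((k+1) - (i:ℤ) - 1)))) m]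
      congr 1
      · refine Finset.sum_congr rfl fun i _ => ?_
        have h2 : (k+1) - ((i+1 : ℕ):ℤ) - 1 = k - (i:ℤ) - 1 := by push_cast; ring
        simp only [h2]
        try ring
      · have h2 : (k+1) - ((0 : ℕ):ℤ) - 1 = k := by norm_num
        simp only [h2]
        try ring
    have hR : lam * (∑ i ∈ Finset.range (m+1), lam^(i+1) * (y (k - (i:ℤ) - 1) ⬝ᵥ (P *ᵥ y (k - (i:ℤ) - 1))))
        = (∑ i ∈ Finset.range m, lam^(i+2) * (y (k - (i:ℤ) - 1) ⬝ᵥ (P *ᵥ y (k - (i:ℤ) - 1))))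
          + lam^(m+1+1) * (y (k - (m:ℤ) - 1) ⬝ᵥ (P *ᵥ y (k - (m:ℤ) - 1))) := by
      rw [Finset.sum_range_succ, mul_add, Finset.mul_sum]
      congr 1
      · exact Finset.sum_congr rfl fun i _ => by ring
      · ring
    rw [hL]
    linarith
  -- One-step decrease of the Krasovskii functional
  have hVstep : ∀ k : ℤ, 0 ≤ k →
      Vfun P κ lam m y (k+1) ≤ lam * Vfun P κ lam m y k + γ * δ := by
    intro k hk
    have h1 := hstep k hk
    have h2 := hSstep k
    simp only [Vfun]
    rw [h2]
    nlinarith [h1, hκ0.le]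
  -- nonnegativity facts
  have hQ0 : ∀ j : ℤ, 0 ≤ y j ⬝ᵥ (P *ᵥ y j) := fun j => qd_nonneg hP _
  have hQV : ∀ k : ℤ, y k ⬝ᵥ (P *ᵥ y k) ≤ Vfun P κ lam m y k := by
    intro k
    simp only [Vfun]
    have hs : 0 ≤ ∑ i ∈ Finset.range (m+1),
        lam^(i+1) * (y (k - (i:ℤ) - 1) ⬝ᵥ (P *ᵥ y (k - (i:ℤ) - 1))) :=
      Finset.sum_nonneg fun i _ => mul_nonneg (pow_nonneg hlam0.le _) (hQ0 _)
    nlinarith [mul_nonneg hκ0.le hs]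
  -- level bound on initial data
  have hD1 : (1:ℝ) ≤ 1 + κ * ((lam - lam ^ (m + 1 + 1)) / (1 - lam)) := by
    have hpow : lam ^ (m+1+1) ≤ lam := by
      calc lam ^ (m+1+1) ≤ lam ^ 1 := pow_le_pow_of_le_one hlam0.le hlam1.le (by omega)
        _ = lam := pow_one lam
    have hfrac : 0 ≤ (lam - lam ^ (m + 1 + 1)) / (1 - lam) :=
      div_nonneg (by linarith) (by linarith)
    nlinarith [mul_nonneg hκ0.le hfrac]
  have hc_le : ∀ i : ℕ, i ≤ m + 1 →
      y (-(i:ℤ)) ⬝ᵥ (P *ᵥ y (-(i:ℤ))) ≤ η / (1 + κ * ((lam - lam ^ (m + 1 + 1)) / (1 - lam))) :=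
    fun i hi => hinitlevel _ (hinit i hi)
  have hcη : η / (1 + κ * ((lam - lam ^ (m + 1 + 1)) / (1 - lam))) ≤ η :=
    div_le_self hη hD1
  have hc0 : 0 ≤ η / (1 + κ * ((lam - lam ^ (m + 1 + 1)) / (1 - lam))) :=
    div_nonneg hη (by linarith)
  -- geometric sum
  have hgeom : ∑ i ∈ Finset.range (m+1), lam^(i+1) = (lam - lam ^ (m + 1 + 1)) / (1 - lam) := by
    have h1 : ∑ i ∈ Finset.range (m+1), lam^(i+1) = lam * ∑ i ∈ Finset.range (m+1), lam^i := by
      rw [Finset.mul_sum]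
      exact Finset.sum_congr rfl fun i _ => by ring
    rw [h1, geom_sum_eq (ne_of_lt hlam1)]
    have hne : lam - 1 ≠ 0 := by intro hc; linarith
    have hne2 : (1:ℝ) - lam ≠ 0 := by intro hc; linarith
    field_simp
    ring
  -- V at time 0
  have hV0 : Vfun P κ lam m y 0 ≤ η := by
    simp only [Vfun]
    set c := η / (1 + κ * ((lam - lam ^ (m + 1 + 1)) / (1 - lam))) with hc
    have hQ0c : y (0:ℤ) ⬝ᵥ (P *ᵥ y (0:ℤ)) ≤ c := by
      have := hc_le 0 (Nat.zero_le _)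
      simpa using this
    have hsum_le : ∑ i ∈ Finset.range (m+1),
        lam^(i+1) * (y ((0:ℤ) - (i:ℤ) - 1) ⬝ᵥ (P *ᵥ y ((0:ℤ) - (i:ℤ) - 1)))
        ≤ (∑ i ∈ Finset.range (m+1), lam^(i+1)) * c := by
      rw [Finset.sum_mul]
      refine Finset.sum_le_sum fun i hi => ?_
      have hi' : i + 1 ≤ m + 1 := by
        have := Finset.mem_range.mp hi; omega
      have hidx2 : (0:ℤ) - (i:ℤ) - 1 = -(((i+1:ℕ)):ℤ) := by push_cast; ring
      rw [hidx2]
      exact mul_le_mul_of_nonneg_left (hc_le (i+1) hi') (pow_nonneg hlam0.le _)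
    rw [hgeom] at hsum_le
    have hDpos : 0 < 1 + κ * ((lam - lam ^ (m + 1 + 1)) / (1 - lam)) := by linarith
    have hcD : c * (1 + κ * ((lam - lam ^ (m + 1 + 1)) / (1 - lam))) = η := by
      rw [hc]; exact div_mul_cancel₀ η (ne_of_gt hDpos)
    nlinarith [mul_le_mul_of_nonneg_left hsum_le hκ0.le]
  -- induction: V stays below β
  have hVnat : ∀ kn : ℕ, Vfun P κ lam m y (kn:ℤ) < β := by
    intro kn
    induction kn with
    | zero => simpa using lt_of_le_of_lt hV0 hηβ
    | succ p ih =>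
      have h1 := hVstep (p:ℤ) (Int.natCast_nonneg p)
      have hcast : ((p+1:ℕ):ℤ) = (p:ℤ)+1 := by push_cast; ring
      rw [hcast]
      nlinarith [mul_lt_mul_of_pos_left ih hlam0]
  have hQβ : ∀ k : ℤ, 0 ≤ k → y k ⬝ᵥ (P *ᵥ y k) < β := by
    intro k hk
    lift k to ℕ using hk
    exact lt_of_le_of_lt (hQV _) (hVnat _)
  -- part 2
  have part2 : ∀ k : ℤ, -((m+1:ℕ):ℤ) ≤ k → y k ∉ Xb := by
    intro k hk hyb
    rcases le_or_gt 0 k with h0 | h0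
    · exact absurd (hunsafelevel _ hyb) (not_le.mpr (hQβ k h0))
    · have hik : (((-k).toNat : ℕ):ℤ) = -k := Int.toNat_of_nonneg (by linarith)
      have hih : (-k).toNat ≤ m + 1 := by omega
      have hmem : y k ∈ Xa := by
        have := hinit ((-k).toNat) hih
        rwa [hik, neg_neg] at this
      have hlev := hinitlevel _ hmem
      have hβ' := hunsafelevel _ hyb
      linarith
  refine ⟨?_, part2⟩
  intro k hk hcontra
  exact part2 k (le_trans (neg_nonpos.mpr (Int.natCast_nonneg _)) hk) hcontra.1
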